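/- Let ⟨·,·⟩₀,…,⟨·,·⟩_k be semi-inner products on complex polynomials (with ⟨·,·⟩₀ positive definite) satisfying ⟨p,p⟩_j ≤ C_j ⟨p,p⟩_{j-1} for all p and all j = 1,…,k, and suppose each multiplication operator D_j is bounded. Then the set of all zeros of all orthogonal polynomials with respect to the Sobolev inner product ⟨p,q⟩_S = Σ_{j=0}^k ⟨p^{(j)}, q^{(j)}⟩_j is a bounded subset of ℂ. -/

import Mathlib

open Polynomial

private lemma iter_add' (m : ℕ) (p q : Polynomial ℂ) :
    derivative^[m] (p + q) = derivative^[m] p + derivative^[m] q := by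
  induction m generalizing p q with
  | zero => simp
  | succ n ih => simp [Function.iterate_succ_apply, derivative_add, ih]

private lemma iter_X_mul' (m : ℕ) (p : Polynomial ℂ) :
    derivative^[m] (X * p) = X * derivative^[m] p + (m : ℂ) • derivative^[m - 1] p := by
  induction m generalizing p with
  | zero => simp
  | succ n ih =>
      have h1 : derivative (X * p) = p + X * derivative p := by
        rw [derivative_mul, derivative_X, one_mul]
      rw [Function.iterate_succ_apply, h1, iter_add', ih]
      cases n with
      | zero => simp [add_comm]
      | succ n' =>
          simp only [Nat.add_sub_cancel, ← Function.iterate_succ_apply derivative]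
          push_cast
          rw [add_smul, one_smul]
          module

private lemma cs_semi (B : Polynomial ℂ → Polynomial ℂ → ℂ)
    (hadd : ∀ p q r : Polynomial ℂ, B (p + q) r = B p r + B q r)
    (hsmul : ∀ (a : ℂ) (p q : Polynomial ℂ), B (a • p) q = a * B p q)
    (hsymm : ∀ p q : Polynomial ℂ, B q p = (starRingEnd ℂ) (B p q))
    (hnonneg : ∀ p : Polynomial ℂ, 0 ≤ (B p p).re)
    (p q : Polynomial ℂ) (hq : 0 < (B q q).re) :
    ‖B p q‖ ^ 2 ≤ (B p p).re * (B q q).re := by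
  set t := B q q with ht
  have hconj : (starRingEnd ℂ) t = t := (hsymm q q).symm
  have htr : (t.re : ℂ) = t := Complex.conj_eq_iff_re.mp hconj
  have htne : t ≠ 0 := by
    intro h; rw [h] at hq; simp at hq
  set w := B p q with hw
  set c := w / t with hc
  have e1 : ∀ r, B (p + (-c) • q) r = B p r - c * B q r := by
    intro r; rw [hadd, hsmul]; ring
  have hE : B (p + (-c) • q) (p + (-c) • q)
      = B p p - ((‖w‖ ^ 2 / t.re : ℝ) : ℂ) := by
    rw [e1, hsymm (p + (-c) • q) p, hsymm (p + (-c) • q) q, e1, e1]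
    rw [map_sub, map_sub, map_mul, map_mul, ← hsymm p p, hsymm p q, ← hw, ← ht]
    have : ((‖w‖ ^ 2 / t.re : ℝ) : ℂ) = w * (starRingEnd ℂ) w / t := by
      push_cast
      rw [← Complex.ofReal_pow, Complex.sq_norm, ← Complex.mul_conj, htr]
    rw [this, Complex.conj_conj, hconj, hc]
    have hcc : (starRingEnd ℂ) (w / t) = (starRingEnd ℂ) w / t := by
      rw [map_div₀, hconj]
    rw [hcc]
    field_simp
    ring
  have h0 := hnonneg (p + (-c) • q)
  rw [hE, Complex.sub_re, Complex.ofReal_re] at h0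
  have : ‖w‖ ^ 2 / t.re ≤ (B p p).re := by linarith
  calc ‖w‖ ^ 2 = ‖w‖ ^ 2 / t.re * t.re := by field_simp
    _ ≤ (B p p).re * t.re := mul_le_mul_of_nonneg_right this hq.le

private lemma par_semi (B : Polynomial ℂ → Polynomial ℂ → ℂ)
    (hadd : ∀ p q r : Polynomial ℂ, B (p + q) r = B p r + B q r)
    (hsmul : ∀ (a : ℂ) (p q : Polynomial ℂ), B (a • p) q = a * B p q)
    (hsymm : ∀ p q : Polynomial ℂ, B q p = (starRingEnd ℂ) (B p q))
    (hnonneg : ∀ p : Polynomial ℂ, 0 ≤ (B p p).re)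
    (a b : Polynomial ℂ) :
    (B (a + b) (a + b)).re ≤ 2 * (B a a).re + 2 * (B b b).re := by
  have key : ∀ s : ℂ, B (a + s • b) (a + s • b)
      = (starRingEnd ℂ) (B a a + s * (starRingEnd ℂ) (B a b))
        + s * (starRingEnd ℂ) (B a b + s * B b b) := by
    intro s
    rw [hadd, hsmul, hsymm (a + s • b) a, hsymm (a + s • b) b,
      hadd, hsmul, hadd, hsmul, hsymm a b]
  have h1 : (B (a + b) (a + b)).re
      = (B a a).re + (B b b).re + 2 * (B a b).re := by
    have := congrArg Complex.re (key 1)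
    rw [one_smul] at this
    rw [this]
    simp [Complex.add_re, Complex.conj_re]
    ring
  have h2 : 0 ≤ (B a a).re + (B b b).re - 2 * (B a b).re := by
    have hn := hnonneg (a + (-1 : ℂ) • b)
    rw [key (-1)] at hn
    simp [Complex.add_re, Complex.conj_re] at hn
    linarith
  linarith [hnonneg a, hnonneg b]

private lemma smul_diag (B : Polynomial ℂ → Polynomial ℂ → ℂ)
    (hsmul : ∀ (a : ℂ) (p q : Polynomial ℂ), B (a • p) q = a * B p q)
    (hsymm : ∀ p q : Polynomial ℂ, B q p = (starRingEnd ℂ) (B p q))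
    (c : ℂ) (p : Polynomial ℂ) :
    (B (c • p) (c • p)).re = Complex.normSq c * (B p p).re := by
  have : B (c • p) (c • p) = c * (starRingEnd ℂ) (c * B p p) := by
    rw [hsmul, hsymm (c • p) p, hsmul]
  rw [this, map_mul]
  have : c * ((starRingEnd ℂ) c * (starRingEnd ℂ) (B p p))
      = (Complex.normSq c : ℂ) * (starRingEnd ℂ) (B p p) := by
    rw [← mul_assoc, Complex.mul_conj]
  rw [this]
  simp [Complex.mul_re, Complex.conj_re, Complex.conj_im]

/-- Under sequential domination and boundedness of each multiplication
operator, the set of all zeros of all Sobolev orthogonal polynomials for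
`⟨p,q⟩_S = Σ_j ⟨p⁽ʲ⁾, q⁽ʲ⁾⟩_j` is bounded in ℂ. -/
theorem stmt_6 (k : ℕ) (ip : Fin (k + 1) → Polynomial ℂ → Polynomial ℂ → ℂ)
    (hadd : ∀ j, ∀ p q r : Polynomial ℂ, ip j (p + q) r = ip j p r + ip j q r)
    (hsmul : ∀ j, ∀ (a : ℂ) (p q : Polynomial ℂ), ip j (a • p) q = a * ip j p q)
    (hsymm : ∀ j, ∀ p q : Polynomial ℂ, ip j q p = (starRingEnd ℂ) (ip j p q))
    (hnonneg : ∀ j, ∀ p : Polynomial ℂ, 0 ≤ (ip j p p).re)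
    (hdef0 : ∀ p : Polynomial ℂ, p ≠ 0 → 0 < (ip 0 p p).re)
    (C : Fin k → ℝ) (hCpos : ∀ j, 0 < C j)
    (hdom : ∀ j : Fin k, ∀ p : Polynomial ℂ,
      (ip j.succ p p).re ≤ C j * (ip j.castSucc p p).re)
    (D : Fin (k + 1) → ℝ) (hDpos : ∀ j, 0 ≤ D j)
    (hbound : ∀ j, ∀ p : Polynomial ℂ,
      (ip j (X * p) (X * p)).re ≤ (D j) ^ 2 * (ip j p p).re)
    (S : Polynomial ℂ → Polynomial ℂ → ℂ)
    (hS : ∀ p q : Polynomial ℂ,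
      S p q = ∑ j : Fin (k + 1), ip j (derivative^[j.val] p) (derivative^[j.val] q)) :
    ∃ R : ℝ, 0 < R ∧ ∀ (n : ℕ) (φ : Polynomial ℂ), φ ≠ 0 → φ.natDegree = n →
      (∀ q : Polynomial ℂ, q.degree < n → S φ q = 0) →
      ∀ z₀ : ℂ, φ.eval z₀ = 0 → ‖z₀‖ < R := by
  -- Basic properties of S
  have Sadd : ∀ p q r : Polynomial ℂ, S (p + q) r = S p r + S q r := by
    intro p q r
    rw [hS, hS, hS, ← Finset.sum_add_distrib]
    exact Finset.sum_congr rfl fun j _ => by rw [iter_add', hadd]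
  have Ssmul : ∀ (a : ℂ) (p q : Polynomial ℂ), S (a • p) q = a * S p q := by
    intro a p q
    rw [hS, hS, Finset.mul_sum]
    exact Finset.sum_congr rfl fun j _ => by
      rw [Polynomial.iterate_derivative_smul, hsmul]
  have Ssymm : ∀ p q : Polynomial ℂ, S q p = (starRingEnd ℂ) (S p q) := by
    intro p q
    rw [hS, hS, map_sum]
    exact Finset.sum_congr rfl fun j _ => hsymm j _ _
  have Sre : ∀ p : Polynomial ℂ, (S p p).re
      = ∑ j : Fin (k + 1), (ip j (derivative^[j.val] p) (derivative^[j.val] p)).re := by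
    intro p
    rw [hS, Complex.re_sum]
  have Snonneg : ∀ p : Polynomial ℂ, 0 ≤ (S p p).re := by
    intro p
    rw [Sre]
    exact Finset.sum_nonneg fun j _ => hnonneg j _
  have Spos : ∀ p : Polynomial ℂ, p ≠ 0 → 0 < (S p p).re := by
    intro p hp
    rw [Sre]
    have h0 : 0 < (ip 0 (derivative^[(0 : Fin (k+1)).val] p)
        (derivative^[(0 : Fin (k+1)).val] p)).re := by
      simpa using hdef0 p hp
    calc (0:ℝ) < (ip 0 (derivative^[(0 : Fin (k+1)).val] p)
          (derivative^[(0 : Fin (k+1)).val] p)).re := h0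
      _ ≤ _ := Finset.single_le_sum (f := fun j : Fin (k+1) =>
          (ip j (derivative^[j.val] p) (derivative^[j.val] p)).re)
          (fun j _ => hnonneg j _) (Finset.mem_univ 0)
  -- The constant
  set M : ℝ := (∑ j : Fin (k+1), 2 * D j ^ 2)
      + (∑ i : Fin k, 2 * ((i : ℕ) + 1) ^ 2 * C i) + 1 with hM
  have hsum1 : 0 ≤ ∑ j : Fin (k+1), 2 * D j ^ 2 :=
    Finset.sum_nonneg fun j _ => by positivity
  have hsum2 : 0 ≤ ∑ i : Fin k, 2 * ((i : ℕ) + 1) ^ 2 * C i :=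
    Finset.sum_nonneg fun i _ => mul_nonneg (by positivity) (hCpos i).le
  have hM1 : (1:ℝ) ≤ M := by rw [hM]; linarith
  have hMpos : (0:ℝ) < M := by linarith
  have hMD : ∀ j : Fin (k+1), 2 * D j ^ 2 ≤ M := by
    intro j
    have h : 2 * D j ^ 2 ≤ ∑ j : Fin (k+1), 2 * D j ^ 2 :=
      Finset.single_le_sum (f := fun j : Fin (k+1) => 2 * D j ^ 2)
        (fun i _ => by positivity) (Finset.mem_univ j)
    rw [hM]; linarith
  have hMC : ∀ i : Fin k, 2 * ((i : ℕ) + 1) ^ 2 * C i ≤ M := by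
    intro i
    have h : 2 * ((i : ℕ) + 1) ^ 2 * C i ≤ ∑ i : Fin k, 2 * ((i : ℕ) + 1) ^ 2 * C i :=
      Finset.single_le_sum (f := fun i : Fin k => 2 * ((i : ℕ) + 1) ^ 2 * C i)
        (fun i _ => mul_nonneg (by positivity) (hCpos i).le) (Finset.mem_univ i)
    rw [hM]; linarith
  -- Boundedness of multiplication by X in the Sobolev norm
  have hK : ∀ p : Polynomial ℂ, (S (X * p) (X * p)).re ≤ (2 * M) * (S p p).re := by
    intro p
    rw [Sre, Sre]
    set T : Fin (k+1) → ℝ := fun j =>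
      (ip j (derivative^[j.val] p) (derivative^[j.val] p)).re with hT
    have hTnn : ∀ j, 0 ≤ T j := fun j => hnonneg j _
    set G : Fin (k+1) → ℝ := fun j =>
      (ip j (derivative^[j.val - 1] p) (derivative^[j.val - 1] p)).re with hG
    have hGnn : ∀ j, 0 ≤ G j := fun j => hnonneg j _
    have step : ∀ j : Fin (k+1),
        (ip j (derivative^[j.val] (X * p)) (derivative^[j.val] (X * p))).re
        ≤ 2 * D j ^ 2 * T j + 2 * ((j : ℕ) : ℝ) ^ 2 * G j := by
      intro j
      rw [iter_X_mul']
      have hpar := par_semi (ip j) (hadd j) (hsmul j) (hsymm j) (hnonneg j)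
        (X * derivative^[j.val] p) (((j : ℕ) : ℂ) • derivative^[j.val - 1] p)
      have hb := hbound j (derivative^[j.val] p)
      have hsm := smul_diag (ip j) (hsmul j) (hsymm j) ((j : ℕ) : ℂ)
        (derivative^[j.val - 1] p)
      have hns : Complex.normSq ((j : ℕ) : ℂ) = ((j : ℕ) : ℝ) ^ 2 := by
        rw [Complex.normSq_natCast]; ring
      rw [hns] at hsm
      calc (ip j (X * derivative^[j.val] p + ((j : ℕ) : ℂ) • derivative^[j.val - 1] p)
            (X * derivative^[j.val] p + ((j : ℕ) : ℂ) • derivative^[j.val - 1] p)).re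
          ≤ 2 * (ip j (X * derivative^[j.val] p) (X * derivative^[j.val] p)).re
            + 2 * (ip j (((j : ℕ) : ℂ) • derivative^[j.val - 1] p)
              (((j : ℕ) : ℂ) • derivative^[j.val - 1] p)).re := hpar
        _ ≤ 2 * D j ^ 2 * T j + 2 * ((j : ℕ) : ℝ) ^ 2 * G j := by
            rw [hsm]; rw [hT, hG]; simp only
            nlinarith [hnonneg j (derivative^[j.val] p)]
    calc ∑ j : Fin (k+1),
          (ip j (derivative^[j.val] (X * p)) (derivative^[j.val] (X * p))).re
        ≤ ∑ j : Fin (k+1), (2 * D j ^ 2 * T j + 2 * ((j : ℕ) : ℝ) ^ 2 * G j) :=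
          Finset.sum_le_sum fun j _ => step j
      _ = (∑ j : Fin (k+1), 2 * D j ^ 2 * T j)
          + ∑ j : Fin (k+1), 2 * ((j : ℕ) : ℝ) ^ 2 * G j := Finset.sum_add_distrib
      _ ≤ (∑ j : Fin (k+1), M * T j) + ∑ j : Fin (k+1), 2 * ((j : ℕ) : ℝ) ^ 2 * G j := by
          refine add_le_add_left (Finset.sum_le_sum fun j _ => ?_) _
          exact mul_le_mul_of_nonneg_right (hMD j) (hTnn j)
      _ = (∑ j : Fin (k+1), M * T j)
          + ∑ i : Fin k, 2 * (((i : ℕ) : ℝ) + 1) ^ 2 * G i.succ := by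
          congr 1
          rw [Fin.sum_univ_succ]
          simp only [Fin.val_zero, Nat.cast_zero, Fin.val_succ]
          norm_num
      _ ≤ (∑ j : Fin (k+1), M * T j) + ∑ i : Fin k, M * T i.castSucc := by
          refine add_le_add_right (Finset.sum_le_sum fun i _ => ?_) _
          have hd := hdom i (derivative^[(i : ℕ)] p)
          have hGi : G i.succ = (ip i.succ (derivative^[(i : ℕ)] p)
              (derivative^[(i : ℕ)] p)).re := by
            rw [hG]; simp [Fin.val_succ]
          have hTi : T i.castSucc = (ip i.castSucc (derivative^[(i : ℕ)] p)
              (derivative^[(i : ℕ)] p)).re := by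
            rw [hT]; simp
          have hTnn' : 0 ≤ T i.castSucc := hTnn _
          have hcoef : 2 * (((i : ℕ) : ℝ) + 1) ^ 2 * C i ≤ M := by
            have := hMC i; push_cast at this ⊢; linarith
          have h1 : 2 * (((i : ℕ) : ℝ) + 1) ^ 2 * G i.succ
              ≤ 2 * (((i : ℕ) : ℝ) + 1) ^ 2 * (C i * T i.castSucc) := by
            rw [hGi, hTi]
            have hnn : (0:ℝ) ≤ 2 * (((i : ℕ) : ℝ) + 1) ^ 2 := by positivity
            rw [← hTi] at hd ⊢
            exact mul_le_mul_of_nonneg_left (by rw [hTi]; exact hdom i _) hnn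
          have h2 : (2 * (((i : ℕ) : ℝ) + 1) ^ 2 * C i) * T i.castSucc
              ≤ M * T i.castSucc := mul_le_mul_of_nonneg_right hcoef hTnn'
          nlinarith [h1, h2]
      _ ≤ M * (∑ j : Fin (k+1), T j) + M * (∑ j : Fin (k+1), T j) := by
          rw [← Finset.mul_sum, ← Finset.mul_sum]
          refine add_le_add_right (mul_le_mul_of_nonneg_left ?_ hMpos.le) _
          rw [Fin.sum_univ_castSucc (f := T)]
          exact le_add_of_nonneg_right (hTnn _)
      _ = (2 * M) * ∑ j : Fin (k+1), T j := by ring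
  -- The radius
  refine ⟨Real.sqrt (2 * M) + 1, by positivity, ?_⟩
  intro n φ hφ hdeg horth z₀ hz
  obtain ⟨ψ, hψ⟩ := dvd_iff_isRoot.mpr hz
  have hψne : ψ ≠ 0 := by
    intro h; apply hφ; rw [hψ, h, mul_zero]
  have hnd : φ.natDegree = 1 + ψ.natDegree := by
    rw [hψ, natDegree_mul (X_sub_C_ne_zero z₀) hψne, natDegree_X_sub_C]
  have hdegψ : ψ.degree < (n : WithBot ℕ) := by
    have h1 : ψ.natDegree < n := by omega
    calc ψ.degree ≤ (ψ.natDegree : WithBot ℕ) := degree_le_natDegree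
      _ < (n : WithBot ℕ) := by exact_mod_cast h1
  have horthψ : S φ ψ = 0 := horth ψ hdegψ
  have hXψ : φ = X * ψ + (-z₀) • ψ := by
    rw [hψ, smul_eq_C_mul]; ring_nf; rw [map_neg]; ring
  have key : S (X * ψ) ψ = z₀ * S ψ ψ := by
    have h := horthψ
    rw [hXψ, Sadd, Ssmul] at h
    have : S (X * ψ) ψ + -z₀ * S ψ ψ = 0 := h
    linear_combination this
  have hψpos : 0 < (S ψ ψ).re := Spos ψ hψne
  have hcs := cs_semi S Sadd Ssmul Ssymm Snonneg (X * ψ) ψ hψpos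
  have hK' := hK ψ
  have himψ : (S ψ ψ).im = 0 := Complex.conj_eq_iff_im.mp (Ssymm ψ ψ).symm
  have habsψ : ‖S ψ ψ‖ = (S ψ ψ).re := by
    rw [Complex.norm_def, Complex.normSq_apply, himψ]
    have h0 : (S ψ ψ).re * (S ψ ψ).re + 0 * 0 = (S ψ ψ).re * (S ψ ψ).re := by ring
    rw [h0, Real.sqrt_mul_self hψpos.le]
  have hsq : ‖z₀‖ ^ 2 * (S ψ ψ).re ^ 2 ≤ (2 * M) * (S ψ ψ).re ^ 2 := by
    have h1 : ‖S (X * ψ) ψ‖ ^ 2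
        = ‖z₀‖ ^ 2 * (S ψ ψ).re ^ 2 := by
      rw [key, norm_mul, habsψ]; ring
    have h2 : (S (X * ψ) (X * ψ)).re * (S ψ ψ).re
        ≤ (2 * M) * (S ψ ψ).re ^ 2 := by
      nlinarith
    linarith [hcs.trans h2, h1 ▸ (hcs.trans h2)]
  have hz2 : ‖z₀‖ ^ 2 ≤ 2 * M := by
    have hr2 : 0 < (S ψ ψ).re ^ 2 := by positivity
    exact le_of_mul_le_mul_right (by linarith) hr2
  have : ‖z₀‖ ≤ Real.sqrt (2 * M) := by
    have := Real.sqrt_le_sqrt hz2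
    rwa [Real.sqrt_sq (norm_nonneg z₀)] at this
  linarith
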